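/- Let X₁, X₂, X₃, X be random variables with values in σ-finite measure spaces (Ω₁,μ₁), (Ω₂,μ₂), (Ω₃,μ₃), (ℝⁿ,μ), having densities f₁, f₂, f₃ and joint densities f₁₃, f₂₃ (w.r.t. the corresponding product measures) and g₃ (the (μ×μ₃)-density of (X,X₃)). Let M = P^{X|X₃}, Mᵢ = P^{Xᵢ|X₃} be the conditional distribution kernels on (Ω₃,𝒜₃,P^{X₃}). Then M₂ is independent of M × M₁ (w.r.t. P^{X₃}) if and only if ∫_{Ω₃} f₂₃(ω₂,ω₃) g₃(x,ω₃) f₁₃(ω₁,ω₃) / f₃(ω₃)² dμ₃(ω₃) = (∫_{Ω₃} f₂₃(ω₂,ω₃) dμ₃(ω₃)) · (∫_{Ω₃} g₃(x,ω₃) f₁₃(ω₁,ω₃) / f₃(ω₃) dμ₃(ω₃)) for μ₂×μ×μ₁-almost every (ω₂, x, ω₁). -/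

import Mathlib

open MeasureTheory ProbabilityTheory
open scoped ENNReal

section Helpers

variable {α β γ : Type*} [MeasurableSpace α] [MeasurableSpace β] [MeasurableSpace γ]

lemma aux_setLIntegral_prod (μa : Measure α) (μb : Measure β) [SFinite μa] [SFinite μb]
    (F : α × β → ℝ≥0∞) (hF : Measurable F) {s : Set α} {t : Set β}
    (hs : MeasurableSet s) (ht : MeasurableSet t) :
    ∫⁻ p in s ×ˢ t, F p ∂(μa.prod μb) = ∫⁻ y in t, ∫⁻ x in s, F (x, y) ∂μa ∂μb := by
  calc ∫⁻ p in s ×ˢ t, F p ∂(μa.prod μb)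
      = ∫⁻ p, (s ×ˢ t).indicator F p ∂(μa.prod μb) := (lintegral_indicator (hs.prod ht) F).symm
    _ = ∫⁻ y, ∫⁻ x, (s ×ˢ t).indicator F (x, y) ∂μa ∂μb :=
        lintegral_prod_symm' _ (hF.indicator (hs.prod ht))
    _ = ∫⁻ y, t.indicator (fun y => ∫⁻ x in s, F (x, y) ∂μa) y ∂μb := by
        refine lintegral_congr fun y => ?_
        by_cases hy : y ∈ t
        · rw [Set.indicator_of_mem hy, ← lintegral_indicator hs]
          refine lintegral_congr fun x => ?_
          by_cases hx : x ∈ s <;> simp [Set.indicator, hx, hy]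
        · rw [Set.indicator_of_notMem hy]
          have : ∀ x, (s ×ˢ t).indicator F (x, y) = 0 := fun x => by
            simp [Set.indicator, hy]
          simp [this]
    _ = ∫⁻ y in t, ∫⁻ x in s, F (x, y) ∂μa ∂μb := lintegral_indicator ht _

lemma aux_setLIntegral_prod_fst (μa : Measure α) (μb : Measure β) [SFinite μa] [SFinite μb]
    (F : α × β → ℝ≥0∞) (hF : Measurable F) {s : Set α} (hs : MeasurableSet s) :
    ∫⁻ p in s ×ˢ (Set.univ : Set β), F p ∂(μa.prod μb)
      = ∫⁻ x in s, ∫⁻ y, F (x, y) ∂μb ∂μa := by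
  calc ∫⁻ p in s ×ˢ (Set.univ : Set β), F p ∂(μa.prod μb)
      = ∫⁻ p, (s ×ˢ (Set.univ : Set β)).indicator F p ∂(μa.prod μb) :=
        (lintegral_indicator (hs.prod MeasurableSet.univ) F).symm
    _ = ∫⁻ x, ∫⁻ y, (s ×ˢ (Set.univ : Set β)).indicator F (x, y) ∂μb ∂μa :=
        lintegral_prod _ (hF.indicator (hs.prod MeasurableSet.univ)).aemeasurable
    _ = ∫⁻ x, s.indicator (fun x => ∫⁻ y, F (x, y) ∂μb) x ∂μa := by
        refine lintegral_congr fun x => ?_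
        by_cases hx : x ∈ s
        · rw [Set.indicator_of_mem hx]
          refine lintegral_congr fun y => ?_
          simp [Set.indicator, hx]
        · rw [Set.indicator_of_notMem hx]
          have : ∀ y, (s ×ˢ (Set.univ : Set β)).indicator F (x, y) = 0 := fun y => by
            simp [Set.indicator, hx]
          simp [this]
    _ = ∫⁻ x in s, ∫⁻ y, F (x, y) ∂μb ∂μa := lintegral_indicator hs _

lemma aux_wd_prod_apply (μa : Measure α) (μb : Measure β) [SFinite μa] [SFinite μb]
    (F : α × β → ℝ≥0∞) (hF : Measurable F) {s : Set α} {t : Set β}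
    (hs : MeasurableSet s) (ht : MeasurableSet t) :
    (μa.prod μb).withDensity F (s ×ˢ t) = ∫⁻ y in t, ∫⁻ x in s, F (x, y) ∂μa ∂μb := by
  rw [withDensity_apply _ (hs.prod ht)]
  exact aux_setLIntegral_prod μa μb F hF hs ht

lemma aux_setLIntegral_prod_mul (μa : Measure α) (μb : Measure β) [SFinite μa] [SFinite μb]
    (f : α → ℝ≥0∞) (g : β → ℝ≥0∞) (hf : Measurable f) (hg : Measurable g)
    {s : Set α} {t : Set β} (hs : MeasurableSet s) (ht : MeasurableSet t) :
    ∫⁻ p in s ×ˢ t, f p.1 * g p.2 ∂(μa.prod μb) =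
      (∫⁻ x in s, f x ∂μa) * ∫⁻ y in t, g y ∂μb := by
  rw [aux_setLIntegral_prod μa μb (fun p => f p.1 * g p.2) (by fun_prop) hs ht]
  calc ∫⁻ y in t, ∫⁻ x in s, f x * g y ∂μa ∂μb
      = ∫⁻ y in t, (∫⁻ x in s, f x ∂μa) * g y ∂μb := by
        refine lintegral_congr fun y => ?_
        rw [lintegral_mul_const _ hf]
    _ = (∫⁻ x in s, f x ∂μa) * ∫⁻ y in t, g y ∂μb := lintegral_const_mul _ hg

lemma aux_meas_setLIntegral (μb : Measure β) [SFinite μb]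
    (F : β × γ → ℝ≥0∞) (hF : Measurable F) {A : Set β} (hA : MeasurableSet A) :
    Measurable fun c => ∫⁻ b in A, F (b, c) ∂μb := by
  have h : ∀ c, ∫⁻ b in A, F (b, c) ∂μb
      = ∫⁻ b, (A ×ˢ (Set.univ : Set γ)).indicator F (b, c) ∂μb := fun c => by
    rw [← lintegral_indicator hA]
    refine lintegral_congr fun b => ?_
    by_cases hb : b ∈ A <;> simp [Set.indicator, hb]
  simp_rw [h]
  exact (hF.indicator (hA.prod MeasurableSet.univ)).lintegral_prod_left'

lemma aux_ext_prod (μ' ν' : Measure (α × β)) [IsFiniteMeasure μ']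
    (h : ∀ s t, MeasurableSet s → MeasurableSet t → μ' (s ×ˢ t) = ν' (s ×ˢ t)) : μ' = ν' := by
  refine MeasureTheory.ext_of_generate_finite _ generateFrom_prod.symm isPiSystem_prod ?_ ?_
  · rintro _ ⟨s, hs, t, ht, rfl⟩
    exact h s t hs ht
  · have := h Set.univ Set.univ MeasurableSet.univ MeasurableSet.univ
    simpa using this

lemma aux_ext_prod3 (μ' ν' : Measure ((α × β) × γ)) [IsFiniteMeasure μ'] [IsFiniteMeasure ν']
    (h : ∀ s t u, MeasurableSet s → MeasurableSet t → MeasurableSet u →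
      μ' ((s ×ˢ t) ×ˢ u) = ν' ((s ×ˢ t) ×ˢ u)) : μ' = ν' := by
  refine aux_ext_prod μ' ν' fun S u hS hu => ?_
  have hfst : Measurable (Prod.fst : (α × β) × γ → α × β) := measurable_fst
  have key : (μ'.restrict (Prod.snd ⁻¹' u)).map Prod.fst
      = (ν'.restrict (Prod.snd ⁻¹' u)).map Prod.fst := by
    refine aux_ext_prod _ _ fun s t hs ht => ?_
    rw [Measure.map_apply hfst (hs.prod ht), Measure.map_apply hfst (hs.prod ht),
      Measure.restrict_apply (hfst (hs.prod ht)), Measure.restrict_apply (hfst (hs.prod ht))]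
    have heq : Prod.fst ⁻¹' (s ×ˢ t) ∩ Prod.snd ⁻¹' u = (s ×ˢ t) ×ˢ u := by
      ext p; simp [Set.mem_prod, and_assoc]
    rw [heq]
    exact h s t u hs ht hu
  have h1 : ∀ (ρ : Measure ((α × β) × γ)),
      ρ (S ×ˢ u) = (ρ.restrict (Prod.snd ⁻¹' u)).map Prod.fst S := fun ρ => by
    rw [Measure.map_apply hfst hS, Measure.restrict_apply (hfst hS)]
    congr 1
  rw [h1 μ', h1 ν', key]

lemma aux_kernel_dens {Ω₃ β : Type*} [MeasurableSpace Ω₃] [MeasurableSpace β]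
    (μ₃ : Measure Ω₃) [SigmaFinite μ₃] (μb : Measure β) [SigmaFinite μb]
    (f₃ : Ω₃ → ℝ≥0∞) (hf₃ : Measurable f₃) (h1 : ∫⁻ ω₃, f₃ ω₃ ∂μ₃ ≠ ∞)
    (N : Kernel Ω₃ β) [IsMarkovKernel N]
    (F : β × Ω₃ → ℝ≥0∞) (hF : Measurable F)
    (hN : ∀ (A : Set β) (A₃ : Set Ω₃), MeasurableSet A → MeasurableSet A₃ →
      (μb.prod μ₃).withDensity F (A ×ˢ A₃) = ∫⁻ ω₃ in A₃, N ω₃ A ∂(μ₃.withDensity f₃))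
    {A : Set β} (hA : MeasurableSet A) :
    (fun ω₃ => N ω₃ A * f₃ ω₃) =ᵐ[μ₃] fun ω₃ => ∫⁻ b in A, F (b, ω₃) ∂μb := by
  have hmeasN : Measurable fun ω₃ => N ω₃ A := Kernel.measurable_coe N hA
  have hmeasG : Measurable fun ω₃ => ∫⁻ b in A, F (b, ω₃) ∂μb :=
    aux_meas_setLIntegral μb F hF hA
  have hfin : ∫⁻ ω₃, N ω₃ A * f₃ ω₃ ∂μ₃ ≠ ∞ := by
    refine ne_top_of_le_ne_top h1 ?_
    refine lintegral_mono fun ω₃ => ?_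
    calc N ω₃ A * f₃ ω₃ ≤ 1 * f₃ ω₃ := by
          gcongr
          exact prob_le_one
      _ = f₃ ω₃ := one_mul _
  rw [← withDensity_eq_iff (f := fun ω₃ => N ω₃ A * f₃ ω₃) (hmeasN.mul hf₃).aemeasurable hmeasG.aemeasurable hfin]
  ext A₃ hA₃
  rw [withDensity_apply _ hA₃, withDensity_apply _ hA₃]
  calc ∫⁻ ω₃ in A₃, N ω₃ A * f₃ ω₃ ∂μ₃
      = ∫⁻ ω₃ in A₃, (f₃ * fun ω₃ => N ω₃ A) ω₃ ∂μ₃ := by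
        refine lintegral_congr fun ω₃ => ?_
        simp [mul_comm]
    _ = ∫⁻ ω₃ in A₃, N ω₃ A ∂(μ₃.withDensity f₃) :=
        (setLIntegral_withDensity_eq_setLIntegral_mul μ₃ hf₃ hmeasN hA₃).symm
    _ = (μb.prod μ₃).withDensity F (A ×ˢ A₃) := (hN A A₃ hA hA₃).symm
    _ = ∫⁻ ω₃ in A₃, ∫⁻ b in A, F (b, ω₃) ∂μb ∂μ₃ := aux_wd_prod_apply μb μ₃ F hF hA hA₃

lemma aux_bind_single {Ω₃ γ : Type*} [MeasurableSpace Ω₃] [MeasurableSpace γ]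
    (μ₃ : Measure Ω₃) [SigmaFinite μ₃] (μc : Measure γ) [SigmaFinite μc]
    (f₃ : Ω₃ → ℝ≥0∞)
    (L : Kernel Ω₃ γ) [IsMarkovKernel L]
    (G : γ × Ω₃ → ℝ≥0∞) (hG : Measurable G)
    (hL : ∀ (A : Set γ) (A₃ : Set Ω₃), MeasurableSet A → MeasurableSet A₃ →
      (μc.prod μ₃).withDensity G (A ×ˢ A₃) = ∫⁻ ω₃ in A₃, L ω₃ A ∂(μ₃.withDensity f₃)) :
    (μ₃.withDensity f₃).bind (fun ω₃ => L ω₃)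
      = μc.withDensity (fun c => ∫⁻ ω₃, G (c, ω₃) ∂μ₃) := by
  ext A hA
  rw [Measure.bind_apply hA L.measurable.aemeasurable]
  have h1 := hL A Set.univ hA MeasurableSet.univ
  rw [Measure.restrict_univ] at h1
  rw [← h1, withDensity_apply _ (hA.prod MeasurableSet.univ),
    aux_setLIntegral_prod_fst μc μ₃ G hG hA, withDensity_apply _ hA]

lemma aux_bind_prod2 {Ω₃ β γ : Type*} [MeasurableSpace Ω₃] [MeasurableSpace β] [MeasurableSpace γ]
    (μ₃ : Measure Ω₃) [SigmaFinite μ₃] (μb : Measure β) [SigmaFinite μb]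
    (μc : Measure γ) [SigmaFinite μc]
    (f₃ : Ω₃ → ℝ≥0∞) (hf₃ : Measurable f₃) (hf₃ne : ∫⁻ ω₃, f₃ ω₃ ∂μ₃ ≠ ∞)
    (K : Kernel Ω₃ β) [IsMarkovKernel K] (L : Kernel Ω₃ γ) [IsMarkovKernel L]
    (F : β × Ω₃ → ℝ≥0∞) (hF : Measurable F) (G : γ × Ω₃ → ℝ≥0∞) (hG : Measurable G)
    (hK : ∀ (A : Set β) (A₃ : Set Ω₃), MeasurableSet A → MeasurableSet A₃ →
      (μb.prod μ₃).withDensity F (A ×ˢ A₃) = ∫⁻ ω₃ in A₃, K ω₃ A ∂(μ₃.withDensity f₃))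
    (hL : ∀ (A : Set γ) (A₃ : Set Ω₃), MeasurableSet A → MeasurableSet A₃ →
      (μc.prod μ₃).withDensity G (A ×ˢ A₃) = ∫⁻ ω₃ in A₃, L ω₃ A ∂(μ₃.withDensity f₃)) :
    (∀ (S : Set (β × γ)) (A₃ : Set Ω₃), MeasurableSet S → MeasurableSet A₃ →
      ((μb.prod μc).prod μ₃).withDensity
        (fun p => F (p.1.1, p.2) * G (p.1.2, p.2) / f₃ p.2) (S ×ˢ A₃)
        = ∫⁻ ω₃ in A₃, (K ×ₖ L) ω₃ S ∂(μ₃.withDensity f₃)) ∧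
    (μ₃.withDensity f₃).bind (fun ω₃ => (K ×ₖ L) ω₃)
      = (μb.prod μc).withDensity
          (fun r => ∫⁻ ω₃, F (r.1, ω₃) * G (r.2, ω₃) / f₃ ω₃ ∂μ₃) := by
  haveI hQfinM : IsFiniteMeasure (μ₃.withDensity f₃) := by
    constructor
    rw [withDensity_apply _ MeasurableSet.univ, setLIntegral_univ]
    exact hf₃ne.lt_top
  set Q : Measure Ω₃ := μ₃.withDensity f₃ with hQdef
  set H : (β × γ) × Ω₃ → ℝ≥0∞ := fun p => F (p.1.1, p.2) * G (p.1.2, p.2) / f₃ p.2 with hHdef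
  have hH : Measurable H := by
    apply Measurable.div
    · exact (hF.comp ((measurable_fst.comp measurable_fst).prodMk measurable_snd)).mul
        (hG.comp ((measurable_snd.comp measurable_fst).prodMk measurable_snd))
    · exact hf₃.comp measurable_snd
  -- marginal of F
  have hmargF : (fun ω₃ => ∫⁻ b, F (b, ω₃) ∂μb) =ᵐ[μ₃] f₃ := by
    filter_upwards [aux_kernel_dens μ₃ μb f₃ hf₃ hf₃ne K F hF hK MeasurableSet.univ] with ω₃ h
    rw [measure_univ, one_mul] at h
    rw [Measure.restrict_univ] at h
    exact h.symm
  have hf₃fin : ∀ᵐ ω₃ ∂μ₃, f₃ ω₃ ≠ ∞ := by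
    filter_upwards [ae_lt_top hf₃ hf₃ne] with ω₃ h using h.ne
  -- the core rectangle computation
  have core : ∀ (B : Set β) (C : Set γ) (A₃ : Set Ω₃), MeasurableSet B → MeasurableSet C →
      MeasurableSet A₃ →
      ((μb.prod μc).prod μ₃).withDensity H ((B ×ˢ C) ×ˢ A₃)
        = ∫⁻ ω₃ in A₃, (K ×ₖ L) ω₃ (B ×ˢ C) ∂Q := by
    intro B C A₃ hB hC hA₃
    have eK := aux_kernel_dens μ₃ μb f₃ hf₃ hf₃ne K F hF hK hB
    have eL := aux_kernel_dens μ₃ μc f₃ hf₃ hf₃ne L G hG hL hC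
    calc ((μb.prod μc).prod μ₃).withDensity H ((B ×ˢ C) ×ˢ A₃)
        = ∫⁻ ω₃ in A₃, ∫⁻ r in B ×ˢ C, H (r, ω₃) ∂(μb.prod μc) ∂μ₃ :=
          aux_wd_prod_apply (μb.prod μc) μ₃ H hH (hB.prod hC) hA₃
      _ = ∫⁻ ω₃ in A₃, (∫⁻ b in B, F (b, ω₃) ∂μb) *
            ((∫⁻ c in C, G (c, ω₃) ∂μc) * (f₃ ω₃)⁻¹) ∂μ₃ := by
          refine lintegral_congr fun ω₃ => ?_
          have h1 : ∀ r : β × γ, H (r, ω₃)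
              = F (r.1, ω₃) * (G (r.2, ω₃) * (f₃ ω₃)⁻¹) := fun r => by
            simp only [hHdef, div_eq_mul_inv, mul_assoc]
          simp_rw [h1]
          rw [aux_setLIntegral_prod_mul μb μc (fun b => F (b, ω₃))
            (fun c => G (c, ω₃) * (f₃ ω₃)⁻¹)
            (hF.comp measurable_prodMk_right)
            ((hG.comp measurable_prodMk_right).mul_const _) hB hC]
          congr 1
          exact lintegral_mul_const _ (hG.comp measurable_prodMk_right)
      _ = ∫⁻ ω₃ in A₃, f₃ ω₃ * (K ω₃ B * L ω₃ C) ∂μ₃ := by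
          refine lintegral_congr_ae (ae_restrict_of_ae ?_)
          filter_upwards [eK, eL, hmargF, hf₃fin] with ω₃ e1 e2 hm hfi
          by_cases h0 : f₃ ω₃ = 0
          · have hFB : ∫⁻ b in B, F (b, ω₃) ∂μb = 0 := by
              refine le_antisymm ?_ zero_le
              calc ∫⁻ b in B, F (b, ω₃) ∂μb ≤ ∫⁻ b, F (b, ω₃) ∂μb :=
                    setLIntegral_le_lintegral _ _
                _ = f₃ ω₃ := hm
                _ = 0 := h0
            rw [hFB, zero_mul, h0, zero_mul]
          · rw [← e1, ← e2]
            have h2 : K ω₃ B * f₃ ω₃ * (L ω₃ C * f₃ ω₃ * (f₃ ω₃)⁻¹)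
                = f₃ ω₃ * (f₃ ω₃)⁻¹ * (f₃ ω₃ * (K ω₃ B * L ω₃ C)) := by ring
            rw [h2, ENNReal.mul_inv_cancel h0 hfi, one_mul]
      _ = ∫⁻ ω₃ in A₃, K ω₃ B * L ω₃ C ∂Q := by
          rw [hQdef, setLIntegral_withDensity_eq_setLIntegral_mul μ₃ (g := fun ω₃ => K ω₃ B * L ω₃ C) hf₃
            ((Kernel.measurable_coe K hB).mul (Kernel.measurable_coe L hC)) hA₃]
          rfl
      _ = ∫⁻ ω₃ in A₃, (K ×ₖ L) ω₃ (B ×ˢ C) ∂Q := by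
          refine lintegral_congr fun ω₃ => ?_
          rw [Kernel.prod_apply, Measure.prod_prod]
  have concl1 : ∀ (S : Set (β × γ)) (A₃ : Set Ω₃), MeasurableSet S → MeasurableSet A₃ →
      ((μb.prod μc).prod μ₃).withDensity H (S ×ˢ A₃)
        = ∫⁻ ω₃ in A₃, (K ×ₖ L) ω₃ S ∂Q := by
    intro S A₃ hS hA₃
    have hfst : Measurable (Prod.fst : (β × γ) × Ω₃ → β × γ) := measurable_fst
    set mρ : Measure (β × γ) :=
      ((((μb.prod μc).prod μ₃).withDensity H).restrict (Prod.snd ⁻¹' A₃)).map Prod.fst with hmρ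
    have hρ : ∀ (S' : Set (β × γ)), MeasurableSet S' →
        mρ S' = ((μb.prod μc).prod μ₃).withDensity H (S' ×ˢ A₃) := by
      intro S' hS'
      rw [hmρ, Measure.map_apply hfst hS', Measure.restrict_apply (hfst hS')]
      congr 1
    set mb : Measure (β × γ) := (Q.restrict A₃).bind (fun ω₃ => (K ×ₖ L) ω₃) with hmb
    have hbap : ∀ (S' : Set (β × γ)), MeasurableSet S' →
        mb S' = ∫⁻ ω₃ in A₃, (K ×ₖ L) ω₃ S' ∂Q := by
      intro S' hS'
      rw [hmb, Measure.bind_apply hS' (K ×ₖ L).measurable.aemeasurable]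
    haveI : IsFiniteMeasure mb := by
      constructor
      rw [hbap Set.univ MeasurableSet.univ]
      calc ∫⁻ ω₃ in A₃, (K ×ₖ L) ω₃ Set.univ ∂Q = ∫⁻ _ω₃ in A₃, 1 ∂Q :=
            lintegral_congr fun ω₃ => measure_univ
        _ = Q A₃ := by rw [setLIntegral_one]
        _ < ∞ := measure_lt_top Q A₃
    have hext : mb = mρ := by
      refine aux_ext_prod mb mρ fun B C hB hC => ?_
      rw [hbap _ (hB.prod hC), hρ _ (hB.prod hC), core B C A₃ hB hC hA₃]
    rw [← hρ S hS, ← hext, hbap S hS]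
  refine ⟨concl1, ?_⟩
  ext S hS
  rw [Measure.bind_apply hS (K ×ₖ L).measurable.aemeasurable]
  have h2 := concl1 S Set.univ hS MeasurableSet.univ
  rw [Measure.restrict_univ] at h2
  rw [← h2, withDensity_apply _ (hS.prod MeasurableSet.univ),
    aux_setLIntegral_prod_fst (μb.prod μc) μ₃ H hH hS, withDensity_apply _ hS]

lemma aux_prod_withDensity (m1 : Measure α) (m2 : Measure β) [SFinite m1] [SFinite m2]
    (d1 : α → ℝ≥0∞) (d2 : β → ℝ≥0∞) (hd1 : Measurable d1) (hd2 : Measurable d2)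
    [IsFiniteMeasure (m1.withDensity d1)] [IsFiniteMeasure (m2.withDensity d2)] :
    (m1.withDensity d1).prod (m2.withDensity d2)
      = (m1.prod m2).withDensity (fun p => d1 p.1 * d2 p.2) := by
  refine aux_ext_prod _ _ fun s t hs ht => ?_
  rw [Measure.prod_prod, withDensity_apply _ hs, withDensity_apply _ ht,
    withDensity_apply _ (hs.prod ht),
    aux_setLIntegral_prod_mul m1 m2 d1 d2 hd1 hd2 hs ht]

end Helpers

/-- In terms of densities: `M₂ ⊥⊥ M × M₁` (w.r.t. `Q = P^{X₃}`) iff the stated integral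
identity for the densities holds `μ₂ × μ × μ₁`-a.e. -/
theorem stmt_12 {Ω Ω₁ Ω₂ Ω₃ : Type*} {𝒜 : MeasurableSpace Ω}
    {𝒜₁ : MeasurableSpace Ω₁} {𝒜₂ : MeasurableSpace Ω₂} {𝒜₃ : MeasurableSpace Ω₃} {n : ℕ}
    (P : Measure Ω) [IsProbabilityMeasure P]
    (X : Ω → EuclideanSpace ℝ (Fin n)) (X₁ : Ω → Ω₁) (X₂ : Ω → Ω₂) (X₃ : Ω → Ω₃)
    (hX : Measurable X) (hX₁ : Measurable X₁) (hX₂ : Measurable X₂) (hX₃ : Measurable X₃)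
    (μ : Measure (EuclideanSpace ℝ (Fin n))) [SigmaFinite μ]
    (μ₁ : Measure Ω₁) [SigmaFinite μ₁] (μ₂ : Measure Ω₂) [SigmaFinite μ₂]
    (μ₃ : Measure Ω₃) [SigmaFinite μ₃]
    (f₃ : Ω₃ → ℝ≥0∞) (hf₃ : Measurable f₃)
    (f₁₃ : Ω₁ × Ω₃ → ℝ≥0∞) (hf₁₃ : Measurable f₁₃)
    (f₂₃ : Ω₂ × Ω₃ → ℝ≥0∞) (hf₂₃ : Measurable f₂₃)
    (g₃ : EuclideanSpace ℝ (Fin n) × Ω₃ → ℝ≥0∞) (hg₃ : Measurable g₃)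
    (hd₃ : P.map X₃ = μ₃.withDensity f₃)
    (hd₁₃ : P.map (fun ω => (X₁ ω, X₃ ω)) = (μ₁.prod μ₃).withDensity f₁₃)
    (hd₂₃ : P.map (fun ω => (X₂ ω, X₃ ω)) = (μ₂.prod μ₃).withDensity f₂₃)
    (hdg₃ : P.map (fun ω => (X ω, X₃ ω)) = (μ.prod μ₃).withDensity g₃)
    (M : Kernel Ω₃ (EuclideanSpace ℝ (Fin n))) [IsMarkovKernel M]
    (M₁ : Kernel Ω₃ Ω₁) [IsMarkovKernel M₁] (M₂ : Kernel Ω₃ Ω₂) [IsMarkovKernel M₂]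
    (hM : ∀ (B : Set (EuclideanSpace ℝ (Fin n))) (A₃ : Set Ω₃),
      MeasurableSet B → MeasurableSet A₃ →
      P.map (fun ω => (X ω, X₃ ω)) (B ×ˢ A₃) = ∫⁻ ω₃ in A₃, M ω₃ B ∂(P.map X₃))
    (hM₁ : ∀ (A₁ : Set Ω₁) (A₃ : Set Ω₃), MeasurableSet A₁ → MeasurableSet A₃ →
      P.map (fun ω => (X₁ ω, X₃ ω)) (A₁ ×ˢ A₃) = ∫⁻ ω₃ in A₃, M₁ ω₃ A₁ ∂(P.map X₃))
    (hM₂ : ∀ (A₂ : Set Ω₂) (A₃ : Set Ω₃), MeasurableSet A₂ → MeasurableSet A₃ →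
      P.map (fun ω => (X₂ ω, X₃ ω)) (A₂ ×ˢ A₃) = ∫⁻ ω₃ in A₃, M₂ ω₃ A₂ ∂(P.map X₃)) :
    ((P.map X₃).bind (fun ω₃ => ((M ×ₖ M₁) ×ₖ M₂) ω₃) =
        ((P.map X₃).bind (fun ω₃ => (M ×ₖ M₁) ω₃)).prod
          ((P.map X₃).bind (fun ω₃ => M₂ ω₃))) ↔
      (∀ᵐ p ∂((μ₂.prod μ).prod μ₁),
        ∫⁻ ω₃, f₂₃ (p.1.1, ω₃) * g₃ (p.1.2, ω₃) * f₁₃ (p.2, ω₃) / (f₃ ω₃) ^ 2 ∂μ₃ =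
          (∫⁻ ω₃, f₂₃ (p.1.1, ω₃) ∂μ₃) *
            ∫⁻ ω₃, g₃ (p.1.2, ω₃) * f₁₃ (p.2, ω₃) / f₃ ω₃ ∂μ₃) := by
  haveI hQP : IsProbabilityMeasure (P.map X₃) := Measure.isProbabilityMeasure_map hX₃.aemeasurable
  haveI hQP' : IsProbabilityMeasure (μ₃.withDensity f₃) := hd₃ ▸ hQP
  have hf₃int : ∫⁻ ω₃, f₃ ω₃ ∂μ₃ = 1 := by
    have h := measure_univ (μ := μ₃.withDensity f₃)
    rw [withDensity_apply _ MeasurableSet.univ, setLIntegral_univ] at h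
    exact h
  have hf₃ne : ∫⁻ ω₃, f₃ ω₃ ∂μ₃ ≠ ∞ := by rw [hf₃int]; exact ENNReal.one_ne_top
  -- withDensity-form conditional distribution hypotheses
  have hM' : ∀ (B : Set (EuclideanSpace ℝ (Fin n))) (A₃ : Set Ω₃),
      MeasurableSet B → MeasurableSet A₃ →
      (μ.prod μ₃).withDensity g₃ (B ×ˢ A₃) = ∫⁻ ω₃ in A₃, M ω₃ B ∂(μ₃.withDensity f₃) := by
    intro B A₃ hB hA₃
    rw [← hdg₃, ← hd₃]
    exact hM B A₃ hB hA₃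
  have hM₁' : ∀ (A₁ : Set Ω₁) (A₃ : Set Ω₃), MeasurableSet A₁ → MeasurableSet A₃ →
      (μ₁.prod μ₃).withDensity f₁₃ (A₁ ×ˢ A₃) = ∫⁻ ω₃ in A₃, M₁ ω₃ A₁ ∂(μ₃.withDensity f₃) := by
    intro A₁ A₃ hA₁ hA₃
    rw [← hd₁₃, ← hd₃]
    exact hM₁ A₁ A₃ hA₁ hA₃
  have hM₂' : ∀ (A₂ : Set Ω₂) (A₃ : Set Ω₃), MeasurableSet A₂ → MeasurableSet A₃ →
      (μ₂.prod μ₃).withDensity f₂₃ (A₂ ×ˢ A₃) = ∫⁻ ω₃ in A₃, M₂ ω₃ A₂ ∂(μ₃.withDensity f₃) := by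
    intro A₂ A₃ hA₂ hA₃
    rw [← hd₂₃, ← hd₃]
    exact hM₂ A₂ A₃ hA₂ hA₃
  obtain ⟨hcomp, bind2_eq⟩ :=
    aux_bind_prod2 μ₃ μ μ₁ f₃ hf₃ hf₃ne M M₁ g₃ hg₃ f₁₃ hf₁₃ hM' hM₁'
  have hFcm : Measurable (fun p : (EuclideanSpace ℝ (Fin n) × Ω₁) × Ω₃ =>
      g₃ (p.1.1, p.2) * f₁₃ (p.1.2, p.2) / f₃ p.2) := by fun_prop
  obtain ⟨-, bind1_eq⟩ :=
    aux_bind_prod2 μ₃ (μ.prod μ₁) μ₂ f₃ hf₃ hf₃ne (M ×ₖ M₁) M₂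
      (fun p => g₃ (p.1.1, p.2) * f₁₃ (p.1.2, p.2) / f₃ p.2) hFcm f₂₃ hf₂₃ hcomp hM₂'
  have bind3_eq := aux_bind_single μ₃ μ₂ f₃ M₂ f₂₃ hf₂₃ hM₂'
  -- canonical density for the triple
  have hDcanm : Measurable (fun q : (EuclideanSpace ℝ (Fin n) × Ω₁) × Ω₂ =>
      ∫⁻ ω₃, g₃ (q.1.1, ω₃) * f₁₃ (q.1.2, ω₃) * f₂₃ (q.2, ω₃) / f₃ ω₃ ^ 2 ∂μ₃) := by
    exact Measurable.lintegral_prod_right'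
      (f := fun p : ((EuclideanSpace ℝ (Fin n) × Ω₁) × Ω₂) × Ω₃ =>
        g₃ (p.1.1.1, p.2) * f₁₃ (p.1.1.2, p.2) * f₂₃ (p.1.2, p.2) / f₃ p.2 ^ 2) (by fun_prop)
  have bind1_eq' : (μ₃.withDensity f₃).bind (fun ω₃ => ((M ×ₖ M₁) ×ₖ M₂) ω₃)
      = ((μ.prod μ₁).prod μ₂).withDensity
          (fun q => ∫⁻ ω₃, g₃ (q.1.1, ω₃) * f₁₃ (q.1.2, ω₃) * f₂₃ (q.2, ω₃) / f₃ ω₃ ^ 2 ∂μ₃) := by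
    rw [bind1_eq]
    congr 1
    funext r
    show ∫⁻ ω₃, (g₃ (r.1.1, ω₃) * f₁₃ (r.1.2, ω₃) / f₃ ω₃) * f₂₃ (r.2, ω₃) / f₃ ω₃ ∂μ₃ = _
    refine lintegral_congr fun ω₃ => ?_
    rw [div_eq_mul_inv, div_eq_mul_inv, div_eq_mul_inv, ENNReal.inv_pow]
    ring
  -- measurability of the two factor densities
  have hD₁m : Measurable (fun r : EuclideanSpace ℝ (Fin n) × Ω₁ =>
      ∫⁻ ω₃, g₃ (r.1, ω₃) * f₁₃ (r.2, ω₃) / f₃ ω₃ ∂μ₃) :=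
    Measurable.lintegral_prod_right'
      (f := fun p : (EuclideanSpace ℝ (Fin n) × Ω₁) × Ω₃ =>
        g₃ (p.1.1, p.2) * f₁₃ (p.1.2, p.2) / f₃ p.2) hFcm
  have hD₂m : Measurable (fun c : Ω₂ => ∫⁻ ω₃, f₂₃ (c, ω₃) ∂μ₃) :=
    hf₂₃.lintegral_prod_right'
  -- finiteness of the factor measures
  haveI hfinb2 : IsFiniteMeasure ((μ.prod μ₁).withDensity
      (fun r => ∫⁻ ω₃, g₃ (r.1, ω₃) * f₁₃ (r.2, ω₃) / f₃ ω₃ ∂μ₃)) := by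
    rw [← bind2_eq]
    constructor
    rw [Measure.bind_apply MeasurableSet.univ (M ×ₖ M₁).measurable.aemeasurable]
    calc ∫⁻ ω₃, (M ×ₖ M₁) ω₃ Set.univ ∂(μ₃.withDensity f₃)
        = ∫⁻ _ω₃, 1 ∂(μ₃.withDensity f₃) := lintegral_congr fun ω₃ => measure_univ
      _ = 1 := by rw [lintegral_one, measure_univ]
      _ < ∞ := ENNReal.one_lt_top
  haveI hfinb3 : IsFiniteMeasure (μ₂.withDensity (fun c => ∫⁻ ω₃, f₂₃ (c, ω₃) ∂μ₃)) := by
    rw [← bind3_eq]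
    constructor
    rw [Measure.bind_apply MeasurableSet.univ M₂.measurable.aemeasurable]
    calc ∫⁻ ω₃, M₂ ω₃ Set.univ ∂(μ₃.withDensity f₃)
        = ∫⁻ _ω₃, 1 ∂(μ₃.withDensity f₃) := lintegral_congr fun ω₃ => measure_univ
      _ = 1 := by rw [lintegral_one, measure_univ]
      _ < ∞ := ENNReal.one_lt_top
  have prod_eq := aux_prod_withDensity (μ.prod μ₁) μ₂ _ _ hD₁m hD₂m
  -- integrability of the canonical density
  have hDint : ∫⁻ q, (fun q : (EuclideanSpace ℝ (Fin n) × Ω₁) × Ω₂ =>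
      ∫⁻ ω₃, g₃ (q.1.1, ω₃) * f₁₃ (q.1.2, ω₃) * f₂₃ (q.2, ω₃) / f₃ ω₃ ^ 2 ∂μ₃) q
        ∂((μ.prod μ₁).prod μ₂) ≠ ∞ := by
    have h : ((μ.prod μ₁).prod μ₂).withDensity
        (fun q => ∫⁻ ω₃, g₃ (q.1.1, ω₃) * f₁₃ (q.1.2, ω₃) * f₂₃ (q.2, ω₃) / f₃ ω₃ ^ 2 ∂μ₃)
          Set.univ = 1 := by
      rw [← bind1_eq', Measure.bind_apply MeasurableSet.univ ((M ×ₖ M₁) ×ₖ M₂).measurable.aemeasurable]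
      calc ∫⁻ ω₃, ((M ×ₖ M₁) ×ₖ M₂) ω₃ Set.univ ∂(μ₃.withDensity f₃)
          = ∫⁻ _ω₃, 1 ∂(μ₃.withDensity f₃) := lintegral_congr fun ω₃ => measure_univ
        _ = 1 := by rw [lintegral_one, measure_univ]
    rw [withDensity_apply _ MeasurableSet.univ, setLIntegral_univ] at h
    rw [h]
    exact ENNReal.one_ne_top
  -- the measurable-equivalence transport
  have hD'm : Measurable (fun p : (EuclideanSpace ℝ (Fin n) × Ω₁) × Ω₂ =>
      (∫⁻ ω₃, g₃ (p.1.1, ω₃) * f₁₃ (p.1.2, ω₃) / f₃ ω₃ ∂μ₃) *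
        ∫⁻ ω₃, f₂₃ (p.2, ω₃) ∂μ₃) :=
    (hD₁m.comp measurable_fst).mul (hD₂m.comp measurable_snd)
  rw [hd₃, bind1_eq', bind2_eq, bind3_eq, prod_eq,
    withDensity_eq_iff hDcanm.aemeasurable
      (by exact hD'm.aemeasurable) hDint]
  -- now transport the a.e. statement
  set e : (Ω₂ × EuclideanSpace ℝ (Fin n)) × Ω₁ ≃ᵐ (EuclideanSpace ℝ (Fin n) × Ω₁) × Ω₂ :=
    MeasurableEquiv.prodAssoc.trans MeasurableEquiv.prodComm with he
  have hmap : ((μ₂.prod μ).prod μ₁).map e = (μ.prod μ₁).prod μ₂ := by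
    have h1 : ⇑e = (⇑(MeasurableEquiv.prodComm
        (α := Ω₂) (β := EuclideanSpace ℝ (Fin n) × Ω₁)) ∘ ⇑(MeasurableEquiv.prodAssoc
        (α := Ω₂) (β := EuclideanSpace ℝ (Fin n)) (γ := Ω₁))) := rfl
    rw [h1, ← Measure.map_map MeasurableEquiv.prodComm.measurable
      MeasurableEquiv.prodAssoc.measurable, Measure.prodAssoc_prod]
    rw [show ⇑(MeasurableEquiv.prodComm
        (α := Ω₂) (β := EuclideanSpace ℝ (Fin n) × Ω₁)) = Prod.swap from rfl,
      Measure.prod_swap]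
  have step : ((fun q : (EuclideanSpace ℝ (Fin n) × Ω₁) × Ω₂ =>
        ∫⁻ ω₃, g₃ (q.1.1, ω₃) * f₁₃ (q.1.2, ω₃) * f₂₃ (q.2, ω₃) / f₃ ω₃ ^ 2 ∂μ₃)
      =ᵐ[(μ.prod μ₁).prod μ₂] (fun p =>
        (∫⁻ ω₃, g₃ (p.1.1, ω₃) * f₁₃ (p.1.2, ω₃) / f₃ ω₃ ∂μ₃) * ∫⁻ ω₃, f₂₃ (p.2, ω₃) ∂μ₃))
      ↔ ∀ᵐ p ∂((μ₂.prod μ).prod μ₁),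
        ∫⁻ ω₃, g₃ (p.1.2, ω₃) * f₁₃ (p.2, ω₃) * f₂₃ (p.1.1, ω₃) / f₃ ω₃ ^ 2 ∂μ₃ =
          (∫⁻ ω₃, g₃ (p.1.2, ω₃) * f₁₃ (p.2, ω₃) / f₃ ω₃ ∂μ₃) * ∫⁻ ω₃, f₂₃ (p.1.1, ω₃) ∂μ₃ := by
    rw [← hmap]
    exact ae_map_iff e.measurable.aemeasurable
      (hDcanm.stronglyMeasurable.measurableSet_eq_fun hD'm.stronglyMeasurable)
  refine Iff.trans ?_ (step.trans ?_)
  · exact Iff.rfl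
  · refine Filter.eventually_congr (Filter.Eventually.of_forall fun p => ?_)
    have hL : (∫⁻ ω₃, f₂₃ (p.1.1, ω₃) * g₃ (p.1.2, ω₃) * f₁₃ (p.2, ω₃) / f₃ ω₃ ^ 2 ∂μ₃)
        = ∫⁻ ω₃, g₃ (p.1.2, ω₃) * f₁₃ (p.2, ω₃) * f₂₃ (p.1.1, ω₃) / f₃ ω₃ ^ 2 ∂μ₃ :=
      lintegral_congr fun ω₃ => by rw [mul_rotate]
    constructor
    · intro h
      rw [hL, h]
      exact mul_comm _ _
    · intro h
      rw [← hL, h]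
      exact mul_comm _ _
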